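/- For every θ ∈ (0, π/2) there exists δ_θ > 0 such that for all complex z with |z| ≤ 1 and |arg z| ≥ θ, |κ₁(z)| ≤ 1 − δ_θ. -/

import Mathlib

open Real Complex

/-- Maclaurin coefficients of the degree-1 arc-cosine kernel κ₁. -/
noncomputable def k1Coeff : ℕ → ℝ := fun m =>
  if m = 0 then 1 / Real.pi
  else if m = 1 then 1 / 2
  else if m % 2 = 0 then
    (Nat.doubleFactorial (m - 3) : ℝ) /
      ((m - 1 : ℝ) * (Nat.factorial (m / 2)) * 2 ^ (m / 2) * Real.pi)
  else 0

/-- κ₁ on the closed unit disk, defined by its Maclaurin series. -/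
noncomputable def k1Series (z : ℂ) : ℂ := ∑' n : ℕ, (k1Coeff n : ℂ) * z ^ n

open Set MeasureTheory intervalIntegral


noncomputable def dd (n : ℕ) : ℝ := (Nat.doubleFactorial (2*n-1) : ℝ) / (2^n * n.factorial)

lemma dd_zero : dd 0 = 1 := by simp [dd]

lemma dfact_succ (n : ℕ) :
    Nat.doubleFactorial (2*(n+1)-1) = (2*n+1) * Nat.doubleFactorial (2*n-1) := by
  cases n with
  | zero => simp [Nat.doubleFactorial]
  | succ m =>
    have h : 2*(m+1+1)-1 = (2*(m+1)-1) + 2 := by omega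
    rw [h, Nat.doubleFactorial_add_two]
    have h2 : 2*(m+1)-1+2 = 2*(m+1)+1 := by omega
    rw [h2]

lemma dd_pos (n : ℕ) : 0 < dd n := by
  unfold dd
  positivity

lemma dd_succ (n : ℕ) : dd (n+1) = dd n * ((2*n+1) / (2*n+2)) := by
  unfold dd
  rw [dfact_succ]
  have h1 : (0:ℝ) < 2^n * n.factorial := by positivity
  have h2 : ((2:ℝ)*n+2) ≠ 0 := by positivity
  rw [Nat.factorial_succ]
  push_cast
  field_simp
  ring

lemma dd_le_one (n : ℕ) : dd n ≤ 1 := by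
  induction n with
  | zero => rw [dd_zero]
  | succ m ih =>
    rw [dd_succ]
    have h1 : ((2:ℝ)*m+1)/(2*m+2) ≤ 1 := by
      rw [div_le_one (by positivity)]
      linarith
    nlinarith [dd_pos m]

-- derivative of the n-th "G" function
lemma hasDerivAt_G (n : ℕ) {t : ℝ} (ht : t < 1) :
    HasDerivAt (fun u : ℝ => dd n * n.factorial * (1 - u) ^ (-(1/2) - n : ℝ))
      (dd (n+1) * (n+1).factorial * (1 - t) ^ (-(1/2) - (n+1) : ℝ)) t := by
  have h1t : (0:ℝ) < 1 - t := by linarith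
  have hinner : HasDerivAt (fun u : ℝ => 1 - u) (-1) t := by
    simpa using (hasDerivAt_id t).const_sub 1
  have h := (hinner.rpow_const (p := (-(1/2) - n : ℝ)) (Or.inl h1t.ne')).const_mul
    (dd n * n.factorial)
  refine h.congr_deriv ?_
  rw [show (-(1/2) - ((n:ℝ)+1)) = (-(1/2) - (n:ℝ)) - 1 by ring]
  rw [dd_succ, Nat.factorial_succ]
  push_cast
  have : ((2:ℝ)*n+2) ≠ 0 := by positivity
  field_simp
  ring

lemma hasSum_dd {s : ℝ} (h0 : 0 ≤ s) (h1 : s < 1) :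
    HasSum (fun n => dd n * s ^ n) ((1 - s) ^ (-(1/2) : ℝ)) := by
  rcases eq_or_lt_of_le h0 with rfl | hs
  · have : ((1:ℝ) - 0) ^ (-(1/2) : ℝ) = 1 := by norm_num
    rw [this]
    have h2 : ∀ n : ℕ, n ≠ 0 → dd n * (0:ℝ) ^ n = 0 := by
      intro n hn
      rw [zero_pow hn, mul_zero]
    simpa [dd_zero] using hasSum_single (f := fun n => dd n * (0:ℝ)^n) 0 h2
  set g : ℝ → ℝ := fun t => (1 - t) ^ (-(1/2) : ℝ) with hgdef
  have hUD : UniqueDiffOn ℝ (Icc 0 s) := uniqueDiffOn_Icc hs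
  have hpos : ∀ t ∈ Icc (0:ℝ) s, (0:ℝ) < 1 - t := fun t ht => by
    have := ht.2; linarith
  -- iterated derivatives
  have hiter : ∀ (n : ℕ), ∀ t ∈ Icc (0:ℝ) s,
      iteratedDerivWithin n g (Icc 0 s) t
        = dd n * n.factorial * (1 - t) ^ (-(1/2) - n : ℝ) := by
    intro n
    induction n with
    | zero =>
      intro t ht
      simp [iteratedDerivWithin_zero, dd_zero, hgdef]
    | succ m ih =>
      intro t ht
      rw [iteratedDerivWithin_succ]
      rw [derivWithin_congr ih (ih t ht)]
      rw [((hasDerivAt_G m (lt_of_le_of_lt ht.2 h1)).hasDerivWithinAt).derivWithin (hUD t ht)]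
      push_cast
      ring
  -- Taylor with Cauchy remainder, for each n
  have key : ∀ n : ℕ, |(1 - s) ^ (-(1/2) : ℝ) - ∑ k ∈ Finset.range (n+1), dd k * s ^ k|
      ≤ ((n:ℝ)+1) * s^(n+1) * (1 - s) ^ (-(3/2) : ℝ) := by
    intro n
    have hcd : ContDiffOn ℝ n g (Icc 0 s) := by
      apply ContDiffOn.rpow_const_of_ne
      · exact (contDiffOn_const.sub contDiffOn_id)
      · exact fun t ht => (hpos t ht).ne'
    have hdiff : DifferentiableOn ℝ (iteratedDerivWithin n g (Icc 0 s)) (Ioo 0 s) := by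
      apply DifferentiableOn.congr
        (f := fun t => dd n * n.factorial * (1 - t) ^ (-(1/2) - n : ℝ))
      · intro t ht
        exact ((hasDerivAt_G n (lt_trans ht.2 h1)).differentiableAt).differentiableWithinAt
      · exact fun t ht => hiter n t (Ioo_subset_Icc_self ht)
    have hI : uIcc (0:ℝ) s = Icc 0 s := uIcc_of_le hs.le
    have hO : uIoo (0:ℝ) s = Ioo 0 s := uIoo_of_le hs.le
    obtain ⟨x', hx', heq⟩ := taylor_mean_remainder_cauchy hs.ne (by rw [hI]; exact hcd)
      (by rw [hI, hO]; exact hdiff)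
    rw [hI] at heq
    rw [hO] at hx'
    have htay : taylorWithinEval g n (Icc 0 s) 0 s = ∑ k ∈ Finset.range (n+1), dd k * s ^ k := by
      rw [taylor_within_apply]
      apply Finset.sum_congr rfl
      intro k hk
      rw [hiter k 0 (left_mem_Icc.mpr hs.le)]
      have : ((1:ℝ) - 0) ^ (-(1/2) - k : ℝ) = 1 := by
        rw [sub_zero, Real.one_rpow]
      rw [this]
      rw [smul_eq_mul]
      rw [sub_zero]
      field_simp [Nat.factorial_ne_zero]
    rw [htay] at heq
    rw [hiter (n+1) x' (Ioo_subset_Icc_self hx')] at heq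
    rw [heq]
    have hx0 : 0 < x' := hx'.1
    have hxs : x' < s := hx'.2
    have hA : (0:ℝ) < 1 - x' := by linarith
    have hAs : (0:ℝ) < 1 - s := by linarith
    -- rewrite the rpow exponent
    have hsplit : (1 - x') ^ (-(1/2) - ((n+1:ℕ):ℝ)) =
        (1 - x') ^ (-(3/2) : ℝ) * ((1 - x') ^ n)⁻¹ := by
      rw [show (-(1/2) - ((n+1:ℕ):ℝ)) = (-(3/2)) + (-((n:ℕ) : ℝ)) by push_cast; ring]
      rw [Real.rpow_add hA, Real.rpow_neg hA.le ((n:ℕ):ℝ), Real.rpow_natCast]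
    have hterm : dd (n+1) * ((n+1).factorial : ℝ) * (1 - x') ^ (-(1/2) - ((n+1:ℕ):ℝ)) *
          (s - x') ^ n / (n.factorial : ℝ) * (s - 0)
        = dd (n+1) * ((n:ℝ)+1) * s * ((1 - x') ^ (-(3/2):ℝ) * ((s - x')/(1-x'))^n) := by
      rw [hsplit, Nat.factorial_succ, div_pow]
      push_cast
      field_simp
      ring
    rw [hterm]
    have hfrac : (s - x')/(1-x') ≤ s := by
      rw [div_le_iff₀ hA]
      nlinarith
    have hfrac0 : 0 ≤ (s - x')/(1-x') := div_nonneg (by linarith) hA.le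
    have hb1 : ((s - x')/(1-x'))^n ≤ s^n := pow_le_pow_left₀ hfrac0 hfrac n
    have hb2 : (1 - x') ^ (-(3/2):ℝ) ≤ (1 - s) ^ (-(3/2):ℝ) :=
      Real.rpow_le_rpow_of_nonpos hAs (by linarith) (by norm_num)
    have hnn : (0:ℝ) ≤ (1 - x') ^ (-(3/2):ℝ) := (Real.rpow_pos_of_pos hA _).le
    have hnnY : (0:ℝ) ≤ (1 - s) ^ (-(3/2):ℝ) := (Real.rpow_pos_of_pos hAs _).le
    have hX0 : (0:ℝ) ≤ (1 - x') ^ (-(3/2):ℝ) * ((s - x')/(1-x'))^n :=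
      mul_nonneg hnn (pow_nonneg hfrac0 n)
    rw [_root_.abs_of_nonneg (mul_nonneg (mul_nonneg (mul_nonneg (dd_pos _).le
      (by positivity)) hs.le) hX0)]
    have h5 : (1 - x') ^ (-(3/2):ℝ) * ((s - x')/(1-x'))^n
        ≤ (1 - s) ^ (-(3/2):ℝ) * s^n :=
      mul_le_mul hb2 hb1 (pow_nonneg hfrac0 n) hnnY
    have h6 : dd (n+1) * ((n:ℝ)+1) * s ≤ ((n:ℝ)+1) * s := by
      have hh := mul_le_mul_of_nonneg_right (mul_le_mul_of_nonneg_right (dd_le_one (n+1))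
        (by positivity : (0:ℝ) ≤ (n:ℝ)+1)) hs.le
      linarith
    calc dd (n+1) * ((n:ℝ)+1) * s * ((1 - x') ^ (-(3/2):ℝ) * ((s - x')/(1-x'))^n)
        ≤ ((n:ℝ)+1) * s * ((1 - s) ^ (-(3/2):ℝ) * s^n) :=
          mul_le_mul h6 h5 hX0 (by positivity)
      _ = ((n:ℝ)+1) * s^(n+1) * (1 - s) ^ (-(3/2):ℝ) := by ring
  -- conclude HasSum
  have hC : (0:ℝ) ≤ (1 - s) ^ (-(3/2) : ℝ) := (Real.rpow_pos_of_pos (by linarith) _).le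
  have htend0 : Filter.Tendsto (fun n : ℕ => ((n:ℝ)+1) * s^(n+1) * (1 - s) ^ (-(3/2) : ℝ))
      Filter.atTop (nhds 0) := by
    have h := (summable_pow_mul_geometric_of_norm_lt_one 1 (r := s)
      (by rw [Real.norm_eq_abs, _root_.abs_of_nonneg h0]; exact h1)).tendsto_atTop_zero
    have h2 : Filter.Tendsto (fun n : ℕ => ((n+1:ℕ):ℝ)^1 * s^(n+1)) Filter.atTop (nhds 0) :=
      h.comp (Filter.tendsto_add_atTop_nat 1)
    have h3 := h2.mul_const ((1 - s) ^ (-(3/2) : ℝ))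
    rw [zero_mul] at h3
    convert h3 using 2 with n
    push_cast
    ring
  have htendP : Filter.Tendsto (fun n : ℕ => ∑ k ∈ Finset.range (n+1), dd k * s ^ k)
      Filter.atTop (nhds ((1 - s) ^ (-(1/2) : ℝ))) := by
    rw [tendsto_iff_norm_sub_tendsto_zero]
    apply squeeze_zero_norm _ htend0
    intro n
    simpa [Real.norm_eq_abs, abs_sub_comm] using key n
  have htendP' : Filter.Tendsto (fun n : ℕ => ∑ k ∈ Finset.range n, dd k * s ^ k)
      Filter.atTop (nhds ((1 - s) ^ (-(1/2) : ℝ))) :=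
    (Filter.tendsto_add_atTop_iff_nat 1).mp htendP
  have hsm : Summable (fun n => dd n * s ^ n) := by
    apply summable_of_sum_range_le (c := (1 - s) ^ (-(1/2) : ℝ))
      (fun n => mul_nonneg (dd_pos n).le (pow_nonneg h0 n))
    intro n
    apply Monotone.ge_of_tendsto (f := fun n : ℕ => ∑ k ∈ Finset.range n, dd k * s ^ k) _ htendP'
    intro i j hij
    apply Finset.sum_le_sum_of_subset_of_nonneg (Finset.range_subset_range.mpr hij)
    intro k _ _
    exact mul_nonneg (dd_pos k).le (pow_nonneg h0 k)
  have hEq := tendsto_nhds_unique hsm.hasSum.tendsto_sum_nat htendP'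
  rw [← hEq]
  exact hsm.hasSum

-- Step C : single integral computation
lemma integC {x : ℝ} (n : ℕ) :
    ∫ t in (0:ℝ)..x, dd n * ((x - t) * t^(2*n)) =
      dd n * (x^(2*n+2) / ((2*n+1)*(2*n+2))) := by
  rw [intervalIntegral.integral_const_mul]
  congr 1
  have h1 : ∀ t : ℝ, (x - t) * t^(2*n) = x * t^(2*n) - t^(2*n+1) := by
    intro t; ring
  simp_rw [h1]
  rw [intervalIntegral.integral_sub (by apply Continuous.intervalIntegrable; continuity)
    (by apply Continuous.intervalIntegrable; continuity)]
  rw [intervalIntegral.integral_const_mul, integral_pow, integral_pow]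
  have h2 : ((2*n+1:ℕ):ℝ) ≠ 0 := by positivity
  have h3 : ((2*n+1:ℕ):ℝ)+1 ≠ 0 := by positivity
  push_cast
  field_simp
  ring

-- Step A : FTC
lemma integA {x : ℝ} (h0 : 0 ≤ x) (h1 : x < 1) :
    ∫ t in (0:ℝ)..x, (x - t) * (1 - t^2) ^ (-(1/2) : ℝ) =
      x * Real.arcsin x + Real.sqrt (1 - x^2) - 1 := by
  have huIcc : Set.uIcc (0:ℝ) x = Icc 0 x := uIcc_of_le h0
  have hpos : ∀ t ∈ Set.uIcc (0:ℝ) x, (0:ℝ) < 1 - t^2 := by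
    intro t ht
    rw [huIcc, mem_Icc] at ht
    nlinarith
  have hderiv : ∀ t ∈ Set.uIcc (0:ℝ) x,
      HasDerivAt (fun u => x * Real.arcsin u + Real.sqrt (1 - u^2))
        ((x - t) * (1 - t^2) ^ (-(1/2) : ℝ)) t := by
    intro t ht
    have htpos := hpos t ht
    rw [huIcc, mem_Icc] at ht
    have h1' : t ≠ -1 := by nlinarith
    have h2' : t ≠ 1 := by nlinarith
    have ha : HasDerivAt (fun u : ℝ => x * Real.arcsin u) (x * (1 / Real.sqrt (1 - t^2))) t :=
      (Real.hasDerivAt_arcsin h1' h2').const_mul x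
    have hinner : HasDerivAt (fun u : ℝ => 1 - u^2) (-(2*t)) t := by
      simpa using (hasDerivAt_pow 2 t).const_sub 1
    have hb : HasDerivAt (fun u : ℝ => Real.sqrt (1 - u^2))
        (1 / (2 * Real.sqrt (1 - t^2)) * (-(2*t))) t :=
      (Real.hasDerivAt_sqrt htpos.ne').comp t hinner
    have hsq : 0 < Real.sqrt (1 - t^2) := Real.sqrt_pos.mpr htpos
    refine (ha.add hb).congr_deriv ?_
    rw [Real.rpow_neg htpos.le, ← Real.sqrt_eq_rpow]
    field_simp
    ring
  have hcont : ContinuousOn (fun t : ℝ => (x - t) * (1 - t^2) ^ (-(1/2) : ℝ))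
      (Set.uIcc 0 x) := by
    apply ContinuousOn.mul (by fun_prop)
    apply ContinuousOn.rpow_const (by fun_prop)
    exact fun t ht => Or.inl (hpos t ht).ne'
  rw [intervalIntegral.integral_eq_sub_of_hasDerivAt hderiv (hcont.intervalIntegrable)]
  simp [Real.arcsin_zero, Real.sqrt_one]

lemma hasSum_int {x : ℝ} (h0 : 0 ≤ x) (h1 : x < 1) :
    HasSum (fun n => dd n * (x^(2*n+2) / ((2*n+1)*(2*n+2))))
      (x * Real.arcsin x + Real.sqrt (1 - x^2) - 1) := by
  rcases eq_or_lt_of_le h0 with rfl | hx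
  · have he : (fun n : ℕ => dd n * ((0:ℝ)^(2*n+2) / ((2*n+1)*(2*n+2)))) = fun _ => (0:ℝ) := by
      funext n
      rw [zero_pow (by omega)]
      simp
    rw [he]
    simpa using hasSum_zero
  set μ := volume.restrict (Set.Ioc (0:ℝ) x) with hμ
  set F : ℕ → ℝ → ℝ := fun n t => dd n * ((x - t) * t^(2*n)) with hF
  have hFc : ∀ n, Continuous (F n) := fun n => by fun_prop
  have hFint : ∀ n, Integrable (F n) μ := fun n => (hFc n).integrableOn_Ioc
  have hnorm : ∀ n, ∫ t, ‖F n t‖ ∂μ = dd n * (x^(2*n+2)/((2*n+1)*(2*n+2))) := by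
    intro n
    have heq : ∀ t ∈ Set.Ioc (0:ℝ) x, ‖F n t‖ = F n t := by
      intro t ht
      rw [Real.norm_eq_abs, _root_.abs_of_nonneg]
      exact mul_nonneg (dd_pos n).le (mul_nonneg (by linarith [ht.2]) (pow_nonneg ht.1.le _))
    rw [hμ, setIntegral_congr_fun measurableSet_Ioc heq, ← intervalIntegral.integral_of_le h0]
    exact integC n
  have hsumm : Summable (fun n => ∫ t, ‖F n t‖ ∂μ) := by
    rw [show (fun n => ∫ t, ‖F n t‖ ∂μ) = fun n => dd n * (x^(2*n+2)/((2*n+1)*(2*n+2))) from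
      funext hnorm]
    have hgeom : Summable (fun n : ℕ => x^(2*n+2)) := by
      have he : (fun n : ℕ => x^(2*n+2)) = fun n => (x^2)^n * x^2 := by
        funext n; rw [← pow_mul, ← pow_add]
      rw [he]
      exact (summable_geometric_of_lt_one (by positivity) (by nlinarith)).mul_right _
    apply Summable.of_nonneg_of_le _ _ hgeom
    · intro n
      exact mul_nonneg (dd_pos n).le (by positivity)
    · intro n
      have hD : (1:ℝ) ≤ (2*(n:ℝ)+1)*(2*(n:ℝ)+2) := by nlinarith [Nat.cast_nonneg (α := ℝ) n]
      have h2 := div_le_self (pow_nonneg h0 (2*n+2)) hD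
      have h3 : dd n * (x^(2*n+2) / ((2*(n:ℝ)+1)*(2*(n:ℝ)+2))) ≤
          1 * (x^(2*n+2) / ((2*(n:ℝ)+1)*(2*(n:ℝ)+2))) := by
        apply mul_le_mul_of_nonneg_right (dd_le_one n)
        positivity
      rw [one_mul] at h3
      exact h3.trans h2
  have hkey := hasSum_integral_of_summable_integral_norm hFint hsumm
  have hL : (fun n => ∫ t, F n t ∂μ) = fun n => dd n * (x^(2*n+2)/((2*n+1)*(2*n+2))) := by
    funext n
    rw [hμ, ← intervalIntegral.integral_of_le h0]
    exact integC n
  have hR : ∫ t, (∑' n, F n t) ∂μ = x * Real.arcsin x + Real.sqrt (1 - x^2) - 1 := by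
    have heq : ∀ t ∈ Set.Ioc (0:ℝ) x, (∑' n, F n t) = (x - t) * (1 - t^2) ^ (-(1/2) : ℝ) := by
      intro t ht
      have ht2 : t^2 < 1 := by nlinarith [ht.1, ht.2]
      have hh := (hasSum_dd (sq_nonneg t) ht2).mul_left (x - t)
      have he2 : (fun n => (x - t) * (dd n * (t^2)^n)) = fun n => F n t := by
        funext n
        rw [hF]
        simp only [← pow_mul]
        ring
      rw [he2] at hh
      exact hh.tsum_eq
    rw [hμ, setIntegral_congr_fun measurableSet_Ioc heq, ← intervalIntegral.integral_of_le h0]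
    exact integA h0 h1
  rw [hL, hR] at hkey
  exact hkey

lemma k1Coeff_zero : k1Coeff 0 = 1 / Real.pi := by simp [k1Coeff]
lemma k1Coeff_one : k1Coeff 1 = 1 / 2 := by simp [k1Coeff]

lemma k1Coeff_even (n : ℕ) :
    k1Coeff (2*n+2) = dd n / ((2*n+1)*(2*n+2)*Real.pi) := by
  have h0 : 2*n+2 ≠ 0 := by omega
  have h1 : 2*n+2 ≠ 1 := by omega
  have h2 : (2*n+2) % 2 = 0 := by omega
  have h3 : 2*n+2-3 = 2*n-1 := by omega
  have h4 : (2*n+2)/2 = n+1 := by omega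
  rw [k1Coeff]
  simp only [h0, h1, h2, h3, h4, if_false, if_true, reduceIte]
  rw [dd]
  have hfac : ((n+1).factorial : ℝ) = (n+1) * n.factorial := by
    rw [Nat.factorial_succ]; push_cast; ring
  have hd : (0:ℝ) < 2^n * n.factorial := by positivity
  have hπ := Real.pi_pos
  rw [hfac]
  push_cast
  rw [div_div]
  rw [show (2*(n:ℝ)+2-1) = 2*(n:ℝ)+1 by ring]
  rw [div_eq_div_iff (by positivity) (by positivity)]
  ring

lemma k1Coeff_odd (m : ℕ) (h : m % 2 = 1) (h1 : m ≠ 1) : k1Coeff m = 0 := by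
  have h0 : m ≠ 0 := by omega
  have h2 : ¬ (m % 2 = 0) := by omega
  simp [k1Coeff, h0, h1, h2]

lemma k1Coeff_nonneg (m : ℕ) : 0 ≤ k1Coeff m := by
  rw [k1Coeff]
  split_ifs with h0 h1 h2
  · positivity
  · norm_num
  · have hm : 2 ≤ m := by omega
    have : (1:ℝ) ≤ (m:ℝ) := by exact_mod_cast Nat.one_le_iff_ne_zero.mpr h0
    have hge : (0:ℝ) ≤ (m:ℝ) - 1 := by linarith
    have hπ := Real.pi_pos
    apply div_nonneg (by positivity)
    apply mul_nonneg (mul_nonneg (mul_nonneg hge (by positivity)) (by positivity)) hπ.le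
  · exact le_rfl

lemma hasSum_k1 {x : ℝ} (h0 : 0 ≤ x) (h1 : x < 1) :
    HasSum (fun n => k1Coeff n * x ^ n)
      ((x * Real.arcsin x + Real.sqrt (1 - x^2) - 1)/Real.pi
        + (k1Coeff 0 * x^0 + k1Coeff 1 * x^1)) := by
  have h2 := (hasSum_int h0 h1).div_const Real.pi
  have he : (fun n => dd n * (x^(2*n+2) / ((2*n+1)*(2*n+2))) / Real.pi)
      = fun n => k1Coeff (2*n+2) * x^(2*n+2) := by
    funext n
    rw [k1Coeff_even]
    have hπ := Real.pi_pos
    have hD : ((2*(n:ℝ)+1)*(2*(n:ℝ)+2)) ≠ 0 := by positivity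
    field_simp
  rw [he] at h2
  have hinj : Function.Injective (fun n : ℕ => 2*n) := by
    intro a b hab
    have : 2*a = 2*b := hab
    omega
  have hzero : ∀ m ∉ Set.range (fun n : ℕ => 2*n), k1Coeff (m+2) * x^(m+2) = 0 := by
    intro m hm
    have hodd : m % 2 = 1 := by
      rcases Nat.even_or_odd m with he | ho
      · exfalso
        apply hm
        obtain ⟨k, hk⟩ := he
        refine ⟨k, ?_⟩
        show 2*k = m
        omega
      · exact Nat.odd_iff.mp ho
    rw [k1Coeff_odd (m+2) (by omega) (by omega), zero_mul]
  have h3 : HasSum (fun m : ℕ => k1Coeff (m+2) * x^(m+2))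
      ((x * Real.arcsin x + Real.sqrt (1 - x^2) - 1)/Real.pi) := by
    exact (Function.Injective.hasSum_iff hinj hzero).mp h2
  apply (hasSum_nat_add_iff' (f := fun n => k1Coeff n * x ^ n) 2).mp
  refine (congrArg (HasSum _) ?_).mpr h3
  rw [Finset.sum_range_succ, Finset.sum_range_one]
  ring

lemma closed_le_one {x : ℝ} (h0 : 0 ≤ x) (h1 : x < 1) :
    (x * Real.arcsin x + Real.sqrt (1 - x^2) - 1)/Real.pi
        + (k1Coeff 0 * x^0 + k1Coeff 1 * x^1) ≤ 1 := by
  rw [k1Coeff_zero, k1Coeff_one]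
  have hπ3 := Real.pi_gt_three
  have hπ := Real.pi_pos
  have hS0 : 0 ≤ Real.sqrt (1 - x^2) := Real.sqrt_nonneg _
  have hS1 : Real.sqrt (1 - x^2) ≤ 1 := Real.sqrt_le_one.mpr (by nlinarith)
  have harc : Real.arcsin x ≤ Real.pi/2 - Real.sqrt (1 - x^2) := by
    rw [Real.arcsin_eq_pi_div_two_sub_arccos]
    have h2 : Real.sqrt (1 - x^2) ≤ Real.arccos x := by
      have := Real.sin_le (Real.arccos_nonneg x)
      rw [Real.sin_arccos] at this
      exact this
    linarith
  have hxarc : x * Real.arcsin x ≤ x * (Real.pi/2 - Real.sqrt (1 - x^2)) :=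
    mul_le_mul_of_nonneg_left harc h0
  rw [pow_zero, pow_one, mul_one]
  rw [div_add' _ _ _ hπ.ne']
  rw [div_le_one hπ]
  have hinv : (1/Real.pi)*Real.pi = 1 := by field_simp
  nlinarith [mul_le_mul_of_nonneg_left hS1 (sub_nonneg.mpr h1.le),
    mul_nonneg (sub_nonneg.mpr h1.le) (by linarith : (0:ℝ) ≤ Real.pi - 1)]

lemma partial_le_one (N : ℕ) : ∑ n ∈ Finset.range N, k1Coeff n ≤ 1 := by
  have hkey : ∀ x : ℝ, x ∈ Ico (0:ℝ) 1 → ∑ n ∈ Finset.range N, k1Coeff n * x^n ≤ 1 := by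
    intro x hx
    refine le_trans ?_ (closed_le_one hx.1 hx.2)
    apply sum_le_hasSum (Finset.range N) _ (hasSum_k1 hx.1 hx.2)
    intro n _
    exact mul_nonneg (k1Coeff_nonneg n) (pow_nonneg hx.1 n)
  have htend : Filter.Tendsto (fun x : ℝ => ∑ n ∈ Finset.range N, k1Coeff n * x^n)
      (nhdsWithin 1 (Iio 1)) (nhds (∑ n ∈ Finset.range N, k1Coeff n)) := by
    have hc : Continuous (fun x : ℝ => ∑ n ∈ Finset.range N, k1Coeff n * x^n) := by
      continuity
    have := hc.tendsto 1
    simp only [one_pow, mul_one] at this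
    exact this.mono_left nhdsWithin_le_nhds
  apply le_of_tendsto htend
  filter_upwards [Ioo_mem_nhdsLT_of_mem (show (1:ℝ) ∈ Ioc 0 1 by norm_num)] with x hx
  exact hkey x ⟨hx.1.le, hx.2⟩

lemma summable_k1 : Summable k1Coeff :=
  summable_of_sum_range_le k1Coeff_nonneg partial_le_one

lemma tsum_k1_le : ∑' n, k1Coeff n ≤ 1 :=
  tsum_le_of_sum_range_le k1Coeff_nonneg partial_le_one

set_option maxHeartbeats 1000000 in
theorem k1_bounded_away_from_one (θ : ℝ) (hθ : θ ∈ Set.Ioo 0 (Real.pi / 2)) :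
    ∃ δ > 0, ∀ z : ℂ, ‖z‖ ≤ 1 → θ ≤ |Complex.arg z| → ‖k1Series z‖ ≤ 1 - δ := by
  obtain ⟨hθ0, hθ2⟩ := hθ
  have hπ := Real.pi_pos
  set a0 : ℝ := 1 / Real.pi with ha0
  set a1 : ℝ := 1 / 2 with ha1
  have ha0p : 0 < a0 := by positivity
  have ha1p : 0 < a1 := by norm_num [ha1]
  have hcos1 : Real.cos θ < 1 := by
    have h := Real.cos_lt_cos_of_nonneg_of_le_pi (le_refl 0) (by linarith) hθ0
    rwa [Real.cos_zero] at h
  have hcosp : 0 < Real.cos θ := Real.cos_pos_of_mem_Ioo ⟨by linarith, hθ2⟩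
  set δ : ℝ := a0 * a1 * (1 - Real.cos θ) / (a0 + a1) with hδ
  have hδp : 0 < δ := by
    apply div_pos (mul_pos (mul_pos ha0p ha1p) (by linarith)) (by linarith)
  refine ⟨δ, hδp, ?_⟩
  intro z hz1 hz2
  have hz0 : z ≠ 0 := by
    intro h
    rw [h] at hz2
    simp [Complex.arg_zero] at hz2
    linarith
  -- real part bound
  have hre : z.re ≤ Real.cos θ := by
    have hca := Complex.cos_arg hz0
    have habs : ‖z‖ = ‖z‖ := rfl
    have habs0 : 0 < ‖z‖ := norm_pos_iff.mpr hz0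
    have hre_eq : z.re = Real.cos (Complex.arg z) * ‖z‖ := by
      rw [hca]; field_simp
    have hcc : Real.cos (Complex.arg z) ≤ Real.cos θ := by
      rw [← Real.cos_abs]
      exact Real.cos_le_cos_of_nonneg_of_le_pi hθ0.le (Complex.abs_arg_le_pi z) hz2
    rcases le_or_gt (Real.cos (Complex.arg z)) 0 with hneg | hpos
    · rw [hre_eq]
      nlinarith
    · rw [hre_eq]
      nlinarith [habs0.le, hz1, habs]
  -- head bound
  have habs1 : ‖z‖ ≤ 1 := hz1
  have hnormsq : z.re^2 + z.im^2 ≤ 1 := by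
    have h1 := Complex.sq_norm z
    rw [Complex.normSq_apply] at h1
    nlinarith [norm_nonneg z]
  have hδsum : δ * (a0 + a1) = a0 * a1 * (1 - Real.cos θ) := by
    rw [hδ]
    field_simp
  have hBnn : 0 ≤ a0 + a1 - δ := by
    nlinarith [hδsum, mul_pos ha0p ha1p, sq_nonneg (a0 + a1)]
  have hhead : ‖(a0:ℂ) + (a1:ℂ) * z‖ ≤ a0 + a1 - δ := by
    have hsq : ‖(a0:ℂ) + (a1:ℂ) * z‖^2 ≤ (a0 + a1 - δ)^2 := by
      rw [Complex.sq_norm, Complex.normSq_apply]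
      simp only [Complex.add_re, Complex.add_im, Complex.mul_re, Complex.mul_im,
        Complex.ofReal_re, Complex.ofReal_im]
      nlinarith [mul_le_mul_of_nonneg_left hre (by positivity : (0:ℝ) ≤ 2*a0*a1),
        mul_le_mul_of_nonneg_left hnormsq (sq_nonneg a1), hδsum, sq_nonneg δ]
    calc ‖(a0:ℂ) + (a1:ℂ) * z‖ = Real.sqrt (‖(a0:ℂ) + (a1:ℂ) * z‖^2) :=
          (Real.sqrt_sq (norm_nonneg _)).symm
      _ ≤ Real.sqrt ((a0 + a1 - δ)^2) := Real.sqrt_le_sqrt hsq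
      _ = a0 + a1 - δ := Real.sqrt_sq hBnn
  -- tail bound
  have hbound : ∀ n : ℕ, ‖(k1Coeff n : ℂ) * z^n‖ ≤ k1Coeff n := by
    intro n
    rw [norm_mul, norm_pow, Complex.norm_real, Real.norm_eq_abs,
      _root_.abs_of_nonneg (k1Coeff_nonneg n)]
    calc k1Coeff n * ‖z‖^n ≤ k1Coeff n * 1 := by
          apply mul_le_mul_of_nonneg_left _ (k1Coeff_nonneg n)
          exact pow_le_one₀ (norm_nonneg z) hz1
      _ = k1Coeff n := mul_one _
  have hsumz : Summable (fun n : ℕ => (k1Coeff n : ℂ) * z^n) := by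
    apply Summable.of_norm
    exact Summable.of_nonneg_of_le (fun n => norm_nonneg _) hbound summable_k1
  have hsumz2 : Summable (fun n : ℕ => (k1Coeff (n+2) : ℂ) * z^(n+2)) :=
    (summable_nat_add_iff 2).mpr hsumz
  have hsumk2 : Summable (fun n : ℕ => k1Coeff (n+2)) :=
    (summable_nat_add_iff 2).mpr summable_k1
  have hsplitz := Summable.sum_add_tsum_nat_add (f := fun n : ℕ => (k1Coeff n : ℂ) * z^n) 2 hsumz
  have hsplitk := Summable.sum_add_tsum_nat_add (f := k1Coeff) 2 summable_k1
  have hrange2z : ∑ i ∈ Finset.range 2, (k1Coeff i : ℂ) * z^i = (a0:ℂ) + (a1:ℂ) * z := by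
    rw [Finset.sum_range_succ, Finset.sum_range_one, pow_zero, pow_one, mul_one,
      k1Coeff_zero, k1Coeff_one, ha0, ha1]
  have hrange2k : ∑ i ∈ Finset.range 2, k1Coeff i = a0 + a1 := by
    rw [Finset.sum_range_succ, Finset.sum_range_one, k1Coeff_zero, k1Coeff_one]
  have htailk : ∑' n : ℕ, k1Coeff (n+2) ≤ 1 - a0 - a1 := by
    have h1 := tsum_k1_le
    rw [← hsplitk, hrange2k] at h1
    linarith
  have htail : ‖∑' n : ℕ, (k1Coeff (n+2) : ℂ) * z^(n+2)‖ ≤ 1 - a0 - a1 := by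
    calc ‖∑' n : ℕ, (k1Coeff (n+2) : ℂ) * z^(n+2)‖
        ≤ ∑' n : ℕ, ‖(k1Coeff (n+2) : ℂ) * z^(n+2)‖ := norm_tsum_le_tsum_norm hsumz2.norm
      _ ≤ ∑' n : ℕ, k1Coeff (n+2) := Summable.tsum_le_tsum (fun n => hbound (n+2)) hsumz2.norm hsumk2
      _ ≤ 1 - a0 - a1 := htailk
  calc ‖k1Series z‖
      = ‖(∑ i ∈ Finset.range 2, (k1Coeff i : ℂ) * z^i)
          + ∑' n : ℕ, (k1Coeff (n+2) : ℂ) * z^(n+2)‖ := by rw [k1Series, ← hsplitz]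
    _ ≤ ‖∑ i ∈ Finset.range 2, (k1Coeff i : ℂ) * z^i‖
          + ‖∑' n : ℕ, (k1Coeff (n+2) : ℂ) * z^(n+2)‖ := norm_add_le _ _
    _ ≤ (a0 + a1 - δ) + (1 - a0 - a1) := by
          rw [hrange2z]
          exact add_le_add hhead htail
    _ = 1 - δ := by ring
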